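/- arXiv:1209.5628 — 3 statements merged into one kernel-verified Lean document; each statement's English description precedes it below -/
import Mathlib

section
/- For every integer k ≥ 1, the z-derivative of the deformed Eisenstein series satisfies (k/(k+1))·∂_z J_{k+1}(z,τ) = ∂_τ J_k(z,τ), where ∂_z = (1/2πi)∂/∂z and ∂_τ = (1/2πi)∂/∂τ. -/
open Complex

noncomputable section

/-- `q = e^{2πiτ}` -/
def qq (τ : ℂ) : ℂ := Complex.exp (2 * (Real.pi : ℂ) * I * τ)

/-- `p = e^{2πiz}` -/
def pp (z : ℂ) : ℂ := Complex.exp (2 * (Real.pi : ℂ) * I * z)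

/-- Deformed (twisted) Eisenstein series `J_n(z,τ)`. -/
def Jdef (n : ℕ) (z τ : ℂ) : ℂ :=
  (if n = 1 then pp z / (pp z - 1) else 0) + (bernoulli n : ℂ)
    - n * ∑' (k : ℕ+) (r : ℕ+),
        (r : ℂ) ^ (n - 1) * ((pp z) ^ (k : ℕ) + (-1 : ℂ) ^ n * (pp z) ^ (-(k : ℤ)))
          * (qq τ) ^ ((k : ℕ) * (r : ℕ))

/-- Normalized Eisenstein series `E_{2k}`. -/
def Eis (k : ℕ) (τ : ℂ) : ℂ :=
  1 - (4 * k / (bernoulli (2 * k) : ℂ)) *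
      ∑' n : ℕ+, (ArithmeticFunction.sigma (2 * k - 1) n : ℂ) * qq τ ^ (n : ℕ)

/-- Normalized differential in `z`: `(1/2πi) d/dz`. -/
def dz (f : ℂ → ℂ) : ℂ → ℂ := fun z => (2 * (Real.pi : ℂ) * I)⁻¹ * deriv f z

/-- The first Jacobi theta function. -/
def θ₁ (z τ : ℂ) : ℂ :=
  -I * Complex.exp (2 * (Real.pi : ℂ) * I * τ / 8)
    * (Complex.exp ((Real.pi : ℂ) * I * z) - Complex.exp (-((Real.pi : ℂ) * I * z)))
    * ∏' m : ℕ+, (1 - qq τ ^ (m : ℕ)) * (1 - pp z * qq τ ^ (m : ℕ))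
        * (1 - (pp z)⁻¹ * qq τ ^ (m : ℕ))

/-- The Weierstrass ℘ function as given by its Laurent series. -/
def wp (z τ : ℂ) : ℂ :=
  ((2 * (Real.pi : ℂ) * I) ^ 2)⁻¹ *
    (1 / z ^ 2 + ∑' n : ℕ+, ((2 * (n : ℂ) + 1) * 2 * riemannZeta (2 * (n : ℕ) + 2)
        * Eis ((n : ℕ) + 1) τ * z ^ (2 * (n : ℕ))))


/-- Normalized differential in `τ`: `(1/2πi) d/dτ`. -/
def dτ' (f : ℂ → ℂ) : ℂ → ℂ := fun τ => (2 * (Real.pi : ℂ) * I)⁻¹ * deriv f τ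

lemma JJ_abs_pp (w : ℂ) : ‖pp w‖ = Real.exp (-(2*Real.pi*w.im)) := by
  rw [pp, Complex.norm_exp]
  congr 1
  simp [Complex.mul_re, Complex.mul_im]

lemma JJ_pp_zpow (m : ℤ) (w : ℂ) : pp w ^ m = Complex.exp (2*(Real.pi:ℂ)*I*m*w) := by
  rw [pp, ← Complex.exp_int_mul]
  congr 1
  ring

lemma JJ_hasDerivAt_pp_zpow (m : ℤ) (w : ℂ) :
    HasDerivAt (fun x => pp x ^ m) (2*(Real.pi:ℂ)*I*m * pp w ^ m) w := by
  simp only [JJ_pp_zpow]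
  have h := ((hasDerivAt_id w).const_mul (2*(Real.pi:ℂ)*I*(m:ℂ))).cexp
  simpa [mul_comm, mul_assoc, mul_left_comm] using h

lemma JJ_hasDerivAt_pp_pow (a : ℕ) (w : ℂ) :
    HasDerivAt (fun x => pp x ^ a) (2*(Real.pi:ℂ)*I*a * pp w ^ a) w := by
  have := JJ_hasDerivAt_pp_zpow (a:ℤ) w
  simpa using this

lemma JJ_summable_pnat (n : ℕ) {σ : ℝ} (h0 : 0 ≤ σ) (h1 : σ < 1) :
    Summable (fun a : ℕ+ => (a:ℝ)^n * σ^(a:ℕ)) := by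
  have h : Summable (fun m : ℕ => (m:ℝ)^n * σ^m) :=
    summable_pow_mul_geometric_of_norm_lt_one n
      (by rwa [Real.norm_eq_abs, _root_.abs_of_nonneg h0])
  exact h.comp_injective PNat.coe_injective


def JJF (k : ℕ) (τ : ℂ) (i : ℕ+ × ℕ+) (w : ℂ) : ℂ :=
  ((i.2:ℕ):ℂ)^k * ((pp w) ^ ((i.1:ℕ)) + (-1:ℂ)^(k+1) * (pp w) ^ (-((i.1:ℕ):ℤ)))
    * (qq τ) ^ ((i.1:ℕ) * (i.2:ℕ))

def JJF' (k : ℕ) (τ : ℂ) (i : ℕ+ × ℕ+) (w : ℂ) : ℂ :=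
  ((i.2:ℕ):ℂ)^k * ((2*(Real.pi:ℂ)*I*((i.1:ℕ):ℂ)) * (pp w) ^ ((i.1:ℕ))
      - (-1:ℂ)^(k+1) * ((2*(Real.pi:ℂ)*I*((i.1:ℕ):ℂ)) * (pp w) ^ (-((i.1:ℕ):ℤ))))
    * (qq τ) ^ ((i.1:ℕ) * (i.2:ℕ))

def JJG (k : ℕ) (z : ℂ) (i : ℕ+ × ℕ+) (s : ℂ) : ℂ :=
  ((i.2:ℕ):ℂ)^(k-1) * ((pp z) ^ ((i.1:ℕ)) + (-1:ℂ)^k * (pp z) ^ (-((i.1:ℕ):ℤ)))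
    * (qq s) ^ ((i.1:ℕ) * (i.2:ℕ))

def JJG' (k : ℕ) (z : ℂ) (i : ℕ+ × ℕ+) (s : ℂ) : ℂ :=
  ((i.2:ℕ):ℂ)^(k-1) * ((pp z) ^ ((i.1:ℕ)) + (-1:ℂ)^k * (pp z) ^ (-((i.1:ℕ):ℤ)))
    * ((2*(Real.pi:ℂ)*I*((((i.1:ℕ)*(i.2:ℕ) : ℕ)):ℂ)) * (qq s) ^ ((i.1:ℕ) * (i.2:ℕ)))

lemma JJ_hasDerivAt_F (k : ℕ) (τ : ℂ) (i : ℕ+ × ℕ+) (w : ℂ) :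
    HasDerivAt (fun x => JJF k τ i x) (JJF' k τ i w) w := by
  have h1 := JJ_hasDerivAt_pp_pow (i.1:ℕ) w
  have h2 := (JJ_hasDerivAt_pp_zpow (-((i.1:ℕ):ℤ)) w).const_mul ((-1:ℂ)^(k+1))
  have h3 := ((h1.add h2).const_mul (((i.2:ℕ):ℂ)^k)).mul_const ((qq τ) ^ ((i.1:ℕ) * (i.2:ℕ)))
  refine h3.congr_deriv ?_
  simp only [JJF']
  push_cast
  ring

lemma JJ_hasDerivAt_G (k : ℕ) (z : ℂ) (i : ℕ+ × ℕ+) (s : ℂ) :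
    HasDerivAt (fun x => JJG k z i x) (JJG' k z i s) s := by
  have h1 : HasDerivAt (fun x => (qq x) ^ ((i.1:ℕ) * (i.2:ℕ)))
      (2*(Real.pi:ℂ)*I*(((i.1:ℕ)*(i.2:ℕ) : ℕ):ℂ) * (qq s) ^ ((i.1:ℕ) * (i.2:ℕ))) s :=
    JJ_hasDerivAt_pp_pow ((i.1:ℕ) * (i.2:ℕ)) s
  have h2 := h1.const_mul
    (((i.2:ℕ):ℂ)^(k-1) * ((pp z) ^ ((i.1:ℕ)) + (-1:ℂ)^k * (pp z) ^ (-((i.1:ℕ):ℤ))))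
  exact h2

set_option maxHeartbeats 2000000 in
/-- `(k/(k+1)) ∂_z J_{k+1} = ∂_τ J_k` for `k ≥ 1`. -/
theorem deformed_eisenstein_diff_relation (k : ℕ) (hk : 1 ≤ k) (z τ : ℂ)
    (hτ : 0 < τ.im)
    (h1 : ‖qq τ‖ < ‖pp z‖)
    (h2 : ‖pp z‖ < (‖qq τ‖)⁻¹)
    (hp : pp z ≠ 1) :
    ((k : ℂ) / ((k : ℂ) + 1)) * dz (fun w => Jdef (k + 1) w τ) z
      = dτ' (fun s => Jdef k z s) τ := by
  classical
  have hπ : (0:ℝ) < Real.pi := Real.pi_pos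
  set A := ‖pp z‖ with hAdef
  set Q := ‖qq τ‖ with hQdef
  have hA : 0 < A := norm_pos_iff.mpr (Complex.exp_ne_zero _)
  have hQ : 0 < Q := norm_pos_iff.mpr (Complex.exp_ne_zero _)
  set M : ℝ := max A A⁻¹ with hMdef
  have hM1 : 1 ≤ M := by
    rcases le_total 1 A with h | h
    · exact h.trans (le_max_left _ _)
    · exact (one_le_inv_iff₀.mpr ⟨hA, h⟩).trans (le_max_right _ _)
  have hM0 : 0 < M := lt_of_lt_of_le one_pos hM1
  have hAQ : A * Q < 1 := by
    have := mul_lt_mul_of_pos_right h2 hQ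
    rwa [inv_mul_cancel₀ hQ.ne'] at this
  have hAiQ : A⁻¹ * Q < 1 := by
    rw [inv_mul_eq_div, div_lt_one hA]; exact h1
  have hMQ : M * Q < 1 := by
    rcases max_cases A A⁻¹ with ⟨h, _⟩ | ⟨h, _⟩ <;> rw [hMdef, h] <;> assumption
  have hMQ0 : 0 < M * Q := by positivity
  set δ : ℝ := Real.log ((M*Q)⁻¹) / (4*Real.pi) with hδdef
  have hδ : 0 < δ := by
    apply div_pos (Real.log_pos _) (by positivity)
    rw [one_lt_inv_iff₀]
    exact ⟨hMQ0, hMQ⟩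
  set ρ : ℝ := M * Q * Real.exp (2*Real.pi*δ) with hρdef
  have hρ0 : 0 ≤ ρ := by positivity
  have hρ1 : ρ < 1 := by
    have h2πδ : 2*Real.pi*δ = -Real.log (M*Q)/2 := by
      rw [hδdef, Real.log_inv]; field_simp; ring
    have hrw : ρ = Real.exp (Real.log (M*Q) + -Real.log (M*Q)/2) := by
      rw [hρdef, Real.exp_add, Real.exp_log hMQ0, h2πδ]
    rw [hrw]
    have hlt : Real.log (M*Q) < 0 := Real.log_neg hMQ0 hMQ
    rw [show Real.log (M*Q) + -Real.log (M*Q)/2 = Real.log (M*Q)/2 by ring]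
    exact Real.exp_lt_one_iff.mpr (by linarith)
  set σ : ℝ := Real.sqrt ρ with hσdef
  have hσ0 : 0 ≤ σ := Real.sqrt_nonneg _
  have hσ1 : σ < 1 := by
    rw [hσdef, show (1:ℝ) = Real.sqrt 1 by simp]
    exact Real.sqrt_lt_sqrt hρ0 hρ1
  have hσ2 : σ^2 = ρ := Real.sq_sqrt hρ0
  -- key inequality
  have key0 : ∀ X Y : ℝ, 1 ≤ X → 0 ≤ Y → X * Y = ρ → ∀ a b : ℕ+,
      X^(a:ℕ) * Y^((a:ℕ)*(b:ℕ)) ≤ σ^(a:ℕ) * σ^(b:ℕ) := by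
    intro X Y hX hY hXY a b
    have hab : (a:ℕ) ≤ (a:ℕ)*(b:ℕ) := Nat.le_mul_of_pos_right _ b.pos
    have habk : (a:ℕ)+(b:ℕ) ≤ 2*((a:ℕ)*(b:ℕ)) := by
      have ha := a.pos; have hb := b.pos; nlinarith
    calc X^(a:ℕ) * Y^((a:ℕ)*(b:ℕ))
        ≤ X^((a:ℕ)*(b:ℕ)) * Y^((a:ℕ)*(b:ℕ)) := by
          apply mul_le_mul_of_nonneg_right _ (by positivity)
          exact pow_le_pow_right₀ hX hab
      _ = ρ^((a:ℕ)*(b:ℕ)) := by rw [← mul_pow, hXY]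
      _ = σ^(2*((a:ℕ)*(b:ℕ))) := by rw [pow_mul σ 2, hσ2]
      _ ≤ σ^((a:ℕ)+(b:ℕ)) := pow_le_pow_of_le_one hσ0 hσ1.le habk
      _ = σ^(a:ℕ) * σ^(b:ℕ) := pow_add _ _ _
  set T : ℝ := M * Real.exp (2*Real.pi*δ) with hTdef
  have hT1 : 1 ≤ T := by
    have : (1:ℝ) ≤ Real.exp (2*Real.pi*δ) := Real.one_le_exp (by positivity)
    calc (1:ℝ) ≤ M := hM1
      _ = M * 1 := (mul_one M).symm
      _ ≤ T := by rw [hTdef]; exact mul_le_mul_of_nonneg_left this hM0.le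
  have hTQ : T * Q = ρ := by rw [hTdef, hρdef]; ring
  have key1 := key0 T Q hT1 hQ.le hTQ
  set Q' : ℝ := Q * Real.exp (2*Real.pi*δ) with hQ'def
  have hQ'0 : 0 ≤ Q' := by positivity
  have hMQ'ρ : M * Q' = ρ := by rw [hQ'def, hρdef]; ring
  have key2 := key0 M Q' hM1 hQ'0 hMQ'ρ
  -- im bounds on balls
  have him : ∀ x y : ℂ, x ∈ Metric.ball y δ → |y.im - x.im| ≤ δ := by
    intro x y hx
    have h1' : |(y - x).im| ≤ ‖y - x‖ := Complex.abs_im_le_norm _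
    rw [Complex.sub_im] at h1'
    have h2' : ‖y - x‖ < δ := by
      rw [Metric.mem_ball, Complex.dist_eq] at hx
      rwa [norm_sub_rev]
    linarith
  -- bounds for pp on the ball around z
  have hppw : ∀ w ∈ Metric.ball z δ,
      ‖pp w‖ ≤ T ∧ (‖pp w‖)⁻¹ ≤ T := by
    intro w hw
    have h1' := abs_le.mp (him w z hw)
    constructor
    · rw [JJ_abs_pp]
      calc Real.exp (-(2*Real.pi*w.im))
          = Real.exp (-(2*Real.pi*z.im)) * Real.exp (2*Real.pi*(z.im - w.im)) := by
            rw [← Real.exp_add]; ring_nf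
        _ ≤ Real.exp (-(2*Real.pi*z.im)) * Real.exp (2*Real.pi*δ) := by
            apply mul_le_mul_of_nonneg_left _ (Real.exp_nonneg _)
            apply Real.exp_le_exp.mpr
            nlinarith [h1'.2]
        _ ≤ T := by
            have hAeq : A = Real.exp (-(2*Real.pi*z.im)) := by rw [hAdef, JJ_abs_pp]
            rw [hTdef, ← hAeq]
            exact mul_le_mul_of_nonneg_right (le_max_left _ _) (by positivity)
    · have hAinv : A⁻¹ = Real.exp (2*Real.pi*z.im) := by
        rw [hAdef, JJ_abs_pp, ← Real.exp_neg, neg_neg]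
      rw [JJ_abs_pp, ← Real.exp_neg, neg_neg]
      calc Real.exp (2*Real.pi*w.im)
          = Real.exp (2*Real.pi*z.im) * Real.exp (2*Real.pi*(w.im - z.im)) := by
            rw [← Real.exp_add]; ring_nf
        _ ≤ Real.exp (2*Real.pi*z.im) * Real.exp (2*Real.pi*δ) := by
            apply mul_le_mul_of_nonneg_left _ (Real.exp_nonneg _)
            apply Real.exp_le_exp.mpr
            nlinarith [h1'.1]
        _ ≤ T := by
            rw [hTdef, ← hAinv]
            exact mul_le_mul_of_nonneg_right (le_max_right _ _) (by positivity)
  -- bound for qq on the ball around τ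
  have hqqs : ∀ s ∈ Metric.ball τ δ, ‖qq s‖ ≤ Q' := by
    intro s hs
    have h1' := abs_le.mp (him s τ hs)
    have hQeq : Q = Real.exp (-(2*Real.pi*τ.im)) := by rw [hQdef]; exact JJ_abs_pp τ
    have habsq : ‖qq s‖ = Real.exp (-(2*Real.pi*s.im)) := JJ_abs_pp s
    rw [habsq]
    calc Real.exp (-(2*Real.pi*s.im))
        = Real.exp (-(2*Real.pi*τ.im)) * Real.exp (2*Real.pi*(τ.im - s.im)) := by
          rw [← Real.exp_add]; ring_nf
      _ ≤ Real.exp (-(2*Real.pi*τ.im)) * Real.exp (2*Real.pi*δ) := by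
          apply mul_le_mul_of_nonneg_left _ (Real.exp_nonneg _)
          apply Real.exp_le_exp.mpr
          nlinarith [h1'.2]
      _ = Q' := by rw [hQ'def, hQeq]
  -- pp z itself
  have hAM : A ≤ M := le_max_left _ _
  have hAiM : A⁻¹ ≤ M := le_max_right _ _
  -- abs of 2πI
  have habsc : ‖2*(Real.pi:ℂ)*I‖ = 2*Real.pi := by
    simp [abs_of_pos hπ]
  -- the dominating function
  set u : ℕ+ × ℕ+ → ℝ := fun i =>
    (4*Real.pi) * (((i.1:ℕ):ℝ) * σ^(i.1:ℕ)) * (((i.2:ℕ):ℝ)^k * σ^(i.2:ℕ)) with hudef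
  have hu : Summable u := by
    have h1s : Summable (fun a : ℕ+ => ((a:ℕ):ℝ) * σ^(a:ℕ)) := by
      have := JJ_summable_pnat 1 hσ0 hσ1
      simpa using this
    have h2s : Summable (fun b : ℕ+ => ((b:ℕ):ℝ)^k * σ^(b:ℕ)) := JJ_summable_pnat k hσ0 hσ1
    have hprod : Summable (fun i : ℕ+ × ℕ+ =>
        (((i.1:ℕ):ℝ) * σ^(i.1:ℕ)) * (((i.2:ℕ):ℝ)^k * σ^(i.2:ℕ))) :=
      h1s.mul_of_nonneg h2s (fun a => by positivity) (fun b => by positivity)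
    simpa [hudef, mul_assoc] using hprod.mul_left (4*Real.pi)
  have hb1r : ∀ b : ℕ+, (1:ℝ) ≤ ((b:ℕ):ℝ) := fun b => by exact_mod_cast b.one_le
  have h2le : ∀ a : ℕ+, (2:ℝ) ≤ 4*Real.pi*((a:ℕ):ℝ) := by
    intro a
    have ha1 := hb1r a
    nlinarith [Real.pi_gt_three]
  -- norm of the middle factor (z side)
  have hmidF : ∀ (i : ℕ+ × ℕ+), ∀ w ∈ Metric.ball z δ,
      ‖(pp w) ^ ((i.1:ℕ)) + (-1:ℂ)^(k+1) * (pp w) ^ (-((i.1:ℕ):ℤ))‖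
        ≤ 2 * T^(i.1:ℕ) := by
    intro i w hw
    obtain ⟨hb1, hb2⟩ := hppw w hw
    have hpa : ‖(pp w)^((i.1:ℕ))‖ ≤ T^(i.1:ℕ) := by
      rw [norm_pow]; exact pow_le_pow_left₀ (norm_nonneg _) hb1 _
    have hpa' : ‖(pp w)^(-((i.1:ℕ):ℤ))‖ ≤ T^(i.1:ℕ) := by
      rw [norm_zpow, zpow_neg, zpow_natCast, ← inv_pow]
      exact pow_le_pow_left₀ (by positivity) hb2 _
    refine (norm_add_le _ _).trans ?_
    rw [norm_mul]
    have hone : ‖(-1:ℂ)^(k+1)‖ = 1 := by simp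
    rw [hone, one_mul]
    linarith
  -- z-side bounds
  have hnormF : ∀ (i : ℕ+ × ℕ+), ∀ w ∈ Metric.ball z δ, ‖JJF k τ i w‖ ≤ u i := by
    intro i w hw
    have hY : (0:ℝ) ≤ σ^(i.1:ℕ)*σ^(i.2:ℕ)*((i.2:ℕ):ℝ)^k := by positivity
    calc ‖JJF k τ i w‖
        = ((i.2:ℕ):ℝ)^k * ‖(pp w) ^ ((i.1:ℕ)) + (-1:ℂ)^(k+1) * (pp w) ^ (-((i.1:ℕ):ℤ))‖
            * Q^((i.1:ℕ)*(i.2:ℕ)) := by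
          simp only [JJF, norm_mul, norm_pow, Complex.norm_natCast, hQdef]
      _ ≤ ((i.2:ℕ):ℝ)^k * (2 * T^(i.1:ℕ)) * Q^((i.1:ℕ)*(i.2:ℕ)) := by
          apply mul_le_mul_of_nonneg_right _ (by positivity)
          exact mul_le_mul_of_nonneg_left (hmidF i w hw) (by positivity)
      _ = 2 * (T^(i.1:ℕ) * Q^((i.1:ℕ)*(i.2:ℕ))) * ((i.2:ℕ):ℝ)^k := by ring
      _ ≤ 2 * (σ^(i.1:ℕ) * σ^(i.2:ℕ)) * ((i.2:ℕ):ℝ)^k := by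
          apply mul_le_mul_of_nonneg_right _ (by positivity)
          exact mul_le_mul_of_nonneg_left (key1 i.1 i.2) (by norm_num)
      _ = 2 * (σ^(i.1:ℕ)*σ^(i.2:ℕ)*((i.2:ℕ):ℝ)^k) := by ring
      _ ≤ (4*Real.pi*((i.1:ℕ):ℝ)) * (σ^(i.1:ℕ)*σ^(i.2:ℕ)*((i.2:ℕ):ℝ)^k) :=
          mul_le_mul_of_nonneg_right (h2le i.1) hY
      _ = u i := by simp only [hudef]; ring
  have hnormF' : ∀ (i : ℕ+ × ℕ+), ∀ w ∈ Metric.ball z δ, ‖JJF' k τ i w‖ ≤ u i := by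
    intro i w hw
    obtain ⟨hb1, hb2⟩ := hppw w hw
    have hpa : ‖(pp w)^((i.1:ℕ))‖ ≤ T^(i.1:ℕ) := by
      rw [norm_pow]; exact pow_le_pow_left₀ (norm_nonneg _) hb1 _
    have hpa' : ‖(pp w)^(-((i.1:ℕ):ℤ))‖ ≤ T^(i.1:ℕ) := by
      rw [norm_zpow, zpow_neg, zpow_natCast, ← inv_pow]
      exact pow_le_pow_left₀ (by positivity) hb2 _
    have hca : ‖2*(Real.pi:ℂ)*I*((i.1:ℕ):ℂ)‖ = 2*Real.pi*((i.1:ℕ):ℝ) := by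
      rw [norm_mul, habsc, Complex.norm_natCast]
    have t1 : ‖(2*(Real.pi:ℂ)*I*((i.1:ℕ):ℂ)) * (pp w) ^ ((i.1:ℕ))‖
        ≤ 2*Real.pi*((i.1:ℕ):ℝ) * T^(i.1:ℕ) := by
      rw [norm_mul, hca]
      exact mul_le_mul_of_nonneg_left hpa (by positivity)
    have t2 : ‖(-1:ℂ)^(k+1) * ((2*(Real.pi:ℂ)*I*((i.1:ℕ):ℂ)) * (pp w) ^ (-((i.1:ℕ):ℤ)))‖
        ≤ 2*Real.pi*((i.1:ℕ):ℝ) * T^(i.1:ℕ) := by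
      rw [norm_mul, norm_mul, hca]
      have hone : ‖(-1:ℂ)^(k+1)‖ = 1 := by simp
      rw [hone, one_mul]
      exact mul_le_mul_of_nonneg_left hpa' (by positivity)
    have hmid : ‖(2*(Real.pi:ℂ)*I*((i.1:ℕ):ℂ)) * (pp w) ^ ((i.1:ℕ))
        - (-1:ℂ)^(k+1) * ((2*(Real.pi:ℂ)*I*((i.1:ℕ):ℂ)) * (pp w) ^ (-((i.1:ℕ):ℤ)))‖
        ≤ 2*Real.pi*((i.1:ℕ):ℝ) * (2 * T^(i.1:ℕ)) := by
      refine le_trans ?_ (by linarith : ‖(2*(Real.pi:ℂ)*I*((i.1:ℕ):ℂ)) * (pp w) ^ ((i.1:ℕ))‖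
        + ‖(-1:ℂ)^(k+1) * ((2*(Real.pi:ℂ)*I*((i.1:ℕ):ℂ)) * (pp w) ^ (-((i.1:ℕ):ℤ)))‖
        ≤ 2*Real.pi*((i.1:ℕ):ℝ) * (2 * T^(i.1:ℕ)))
      simpa using norm_sub_le ((2*(Real.pi:ℂ)*I*((i.1:ℕ):ℂ)) * (pp w) ^ ((i.1:ℕ)))
        ((-1:ℂ)^(k+1) * ((2*(Real.pi:ℂ)*I*((i.1:ℕ):ℂ)) * (pp w) ^ (-((i.1:ℕ):ℤ))))
    calc ‖JJF' k τ i w‖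
        = ((i.2:ℕ):ℝ)^k * ‖(2*(Real.pi:ℂ)*I*((i.1:ℕ):ℂ)) * (pp w) ^ ((i.1:ℕ))
            - (-1:ℂ)^(k+1) * ((2*(Real.pi:ℂ)*I*((i.1:ℕ):ℂ)) * (pp w) ^ (-((i.1:ℕ):ℤ)))‖
            * Q^((i.1:ℕ)*(i.2:ℕ)) := by
          simp only [JJF', norm_mul, norm_pow, Complex.norm_natCast, hQdef]
      _ ≤ ((i.2:ℕ):ℝ)^k * (2*Real.pi*((i.1:ℕ):ℝ) * (2 * T^(i.1:ℕ))) * Q^((i.1:ℕ)*(i.2:ℕ)) := by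
          apply mul_le_mul_of_nonneg_right _ (by positivity)
          exact mul_le_mul_of_nonneg_left hmid (by positivity)
      _ = (4*Real.pi*((i.1:ℕ):ℝ)) * (T^(i.1:ℕ) * Q^((i.1:ℕ)*(i.2:ℕ))) * ((i.2:ℕ):ℝ)^k := by ring
      _ ≤ (4*Real.pi*((i.1:ℕ):ℝ)) * (σ^(i.1:ℕ) * σ^(i.2:ℕ)) * ((i.2:ℕ):ℝ)^k := by
          apply mul_le_mul_of_nonneg_right _ (by positivity)
          exact mul_le_mul_of_nonneg_left (key1 i.1 i.2) (by positivity)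
      _ = u i := by simp only [hudef]; ring
  -- τ-side bounds
  have hpzA : ∀ a : ℕ+, ‖(pp z)^((a:ℕ))‖ ≤ M^(a:ℕ) := by
    intro a
    rw [norm_pow]
    exact pow_le_pow_left₀ (norm_nonneg _) hAM _
  have hpzA' : ∀ a : ℕ+, ‖(pp z)^(-((a:ℕ):ℤ))‖ ≤ M^(a:ℕ) := by
    intro a
    rw [norm_zpow, zpow_neg, zpow_natCast, ← inv_pow]
    exact pow_le_pow_left₀ (by positivity) hAiM _
  have hmidG : ∀ (i : ℕ+ × ℕ+),
      ‖(pp z) ^ ((i.1:ℕ)) + (-1:ℂ)^k * (pp z) ^ (-((i.1:ℕ):ℤ))‖ ≤ 2 * M^(i.1:ℕ) := by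
    intro i
    refine (norm_add_le _ _).trans ?_
    rw [norm_mul]
    have hone : ‖(-1:ℂ)^k‖ = 1 := by simp
    rw [hone, one_mul]
    linarith [hpzA i.1, hpzA' i.1]
  have hqpow : ∀ (i : ℕ+ × ℕ+), ∀ s ∈ Metric.ball τ δ,
      ‖(qq s)^((i.1:ℕ)*(i.2:ℕ))‖ ≤ Q'^((i.1:ℕ)*(i.2:ℕ)) := by
    intro i s hs
    rw [norm_pow]
    exact pow_le_pow_left₀ (norm_nonneg _) (hqqs s hs) _
  have hbk1 : ∀ b : ℕ+, ((b:ℕ):ℝ)^(k-1) * ((b:ℕ):ℝ) = ((b:ℕ):ℝ)^k := by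
    intro b
    rw [← pow_succ]
    congr 1
    omega
  have hbk2 : ∀ b : ℕ+, ((b:ℕ):ℝ)^(k-1) ≤ ((b:ℕ):ℝ)^k :=
    fun b => pow_le_pow_right₀ (hb1r b) (by omega)
  have hnormG : ∀ (i : ℕ+ × ℕ+), ∀ s ∈ Metric.ball τ δ, ‖JJG k z i s‖ ≤ u i := by
    intro i s hs
    calc ‖JJG k z i s‖
        = ((i.2:ℕ):ℝ)^(k-1) * ‖(pp z) ^ ((i.1:ℕ)) + (-1:ℂ)^k * (pp z) ^ (-((i.1:ℕ):ℤ))‖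
            * ‖(qq s)^((i.1:ℕ)*(i.2:ℕ))‖ := by
          simp only [JJG, norm_mul, norm_pow, Complex.norm_natCast]
      _ ≤ ((i.2:ℕ):ℝ)^(k-1) * (2 * M^(i.1:ℕ)) * Q'^((i.1:ℕ)*(i.2:ℕ)) := by
          apply mul_le_mul (mul_le_mul_of_nonneg_left (hmidG i) (by positivity))
            (hqpow i s hs) (norm_nonneg _) (by positivity)
      _ = 2 * ((i.2:ℕ):ℝ)^(k-1) * (M^(i.1:ℕ) * Q'^((i.1:ℕ)*(i.2:ℕ))) := by ring
      _ ≤ 2 * ((i.2:ℕ):ℝ)^(k-1) * (σ^(i.1:ℕ) * σ^(i.2:ℕ)) := by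
          apply mul_le_mul_of_nonneg_left (key2 i.1 i.2) (by positivity)
      _ ≤ (4*Real.pi*((i.1:ℕ):ℝ)) * ((i.2:ℕ):ℝ)^k * (σ^(i.1:ℕ) * σ^(i.2:ℕ)) := by
          apply mul_le_mul_of_nonneg_right _ (by positivity)
          exact mul_le_mul (h2le i.1) (hbk2 i.2) (by positivity) (by positivity)
      _ = u i := by simp only [hudef]; ring
  have hnormG' : ∀ (i : ℕ+ × ℕ+), ∀ s ∈ Metric.ball τ δ, ‖JJG' k z i s‖ ≤ u i := by
    intro i s hs
    have hcab : ‖2*(Real.pi:ℂ)*I*((((i.1:ℕ)*(i.2:ℕ) : ℕ)):ℂ)‖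
        = 2*Real.pi*(((i.1:ℕ):ℝ)*((i.2:ℕ):ℝ)) := by
      rw [norm_mul, habsc, Complex.norm_natCast]
      push_cast
      ring
    calc ‖JJG' k z i s‖
        = ((i.2:ℕ):ℝ)^(k-1) * ‖(pp z) ^ ((i.1:ℕ)) + (-1:ℂ)^k * (pp z) ^ (-((i.1:ℕ):ℤ))‖
            * (2*Real.pi*(((i.1:ℕ):ℝ)*((i.2:ℕ):ℝ)) * ‖(qq s)^((i.1:ℕ)*(i.2:ℕ))‖) := by
          simp only [JJG', norm_mul, norm_pow, Complex.norm_natCast, hcab]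
      _ ≤ ((i.2:ℕ):ℝ)^(k-1) * (2 * M^(i.1:ℕ))
            * (2*Real.pi*(((i.1:ℕ):ℝ)*((i.2:ℕ):ℝ)) * Q'^((i.1:ℕ)*(i.2:ℕ))) := by
          apply mul_le_mul (mul_le_mul_of_nonneg_left (hmidG i) (by positivity))
            (mul_le_mul_of_nonneg_left (hqpow i s hs) (by positivity))
            (by positivity) (by positivity)
      _ = (4*Real.pi*((i.1:ℕ):ℝ)) * (((i.2:ℕ):ℝ)^(k-1) * ((i.2:ℕ):ℝ))
            * (M^(i.1:ℕ) * Q'^((i.1:ℕ)*(i.2:ℕ))) := by ring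
      _ = (4*Real.pi*((i.1:ℕ):ℝ)) * ((i.2:ℕ):ℝ)^k * (M^(i.1:ℕ) * Q'^((i.1:ℕ)*(i.2:ℕ))) := by
          rw [hbk1]
      _ ≤ (4*Real.pi*((i.1:ℕ):ℝ)) * ((i.2:ℕ):ℝ)^k * (σ^(i.1:ℕ) * σ^(i.2:ℕ)) := by
          apply mul_le_mul_of_nonneg_left (key2 i.1 i.2) (by positivity)
      _ = u i := by simp only [hudef]; ring
  have hzball : z ∈ Metric.ball z δ := Metric.mem_ball_self hδ
  have hτball : τ ∈ Metric.ball τ δ := Metric.mem_ball_self hδ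
  -- summability
  have hsumF : ∀ w ∈ Metric.ball z δ, Summable (fun i => JJF k τ i w) := by
    intro w hw
    apply Summable.of_norm
    apply hu.of_nonneg_of_le (fun i => norm_nonneg _)
    intro i
    simpa using hnormF i w hw
  have hsumG : ∀ s ∈ Metric.ball τ δ, Summable (fun i => JJG k z i s) := by
    intro s hs
    apply Summable.of_norm
    apply hu.of_nonneg_of_le (fun i => norm_nonneg _)
    intro i
    simpa using hnormG i s hs
  -- termwise differentiation of the two series
  have hTz : HasDerivAt (fun w => ∑' i : ℕ+ × ℕ+, JJF k τ i w) (∑' i : ℕ+ × ℕ+, JJF' k τ i z) z :=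
    hasDerivAt_tsum_of_isPreconnected hu Metric.isOpen_ball
      (convex_ball z δ).isPreconnected
      (fun i w _ => JJ_hasDerivAt_F k τ i w)
      (fun i w hw => by simpa using hnormF' i w hw)
      hzball (hsumF z hzball) hzball
  have hTτ : HasDerivAt (fun s => ∑' i : ℕ+ × ℕ+, JJG k z i s) (∑' i : ℕ+ × ℕ+, JJG' k z i τ) τ :=
    hasDerivAt_tsum_of_isPreconnected hu Metric.isOpen_ball
      (convex_ball τ δ).isPreconnected
      (fun i s _ => JJ_hasDerivAt_G k z i s)
      (fun i s hs => by simpa using hnormG' i s hs)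
      hτball (hsumG τ hτball) hτball
  -- rewriting Jdef on the balls
  have hJeqz : Set.EqOn (fun w => Jdef (k+1) w τ)
      (fun w => (bernoulli (k+1) : ℂ) - ((k+1:ℕ):ℂ) * ∑' i : ℕ+ × ℕ+, JJF k τ i w)
      (Metric.ball z δ) := by
    intro w hw
    have hs := hsumF w hw
    have heq := (Summable.tsum_prod' hs (fun a => hs.prod_factor a)).symm
    simp only [Jdef, Nat.add_sub_cancel]
    rw [if_neg (by omega), zero_add]
    exact congrArg (fun t => (bernoulli (k+1) : ℂ) - ((k+1:ℕ):ℂ) * t) heq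
  have hJeqτ : Set.EqOn (fun s => Jdef k z s)
      (fun s => ((if k = 1 then pp z / (pp z - 1) else 0) + (bernoulli k : ℂ))
        - ((k:ℕ):ℂ) * ∑' i : ℕ+ × ℕ+, JJG k z i s)
      (Metric.ball τ δ) := by
    intro s hs
    have hsm := hsumG s hs
    have heq := (Summable.tsum_prod' hsm (fun a => hsm.prod_factor a)).symm
    simp only [Jdef]
    exact congrArg (fun t => ((if k = 1 then pp z / (pp z - 1) else 0) + (bernoulli k : ℂ))
      - ((k:ℕ):ℂ) * t) heq
  -- derivatives of Jdef
  have hJz : HasDerivAt (fun w => Jdef (k+1) w τ)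
      (-(((k+1:ℕ):ℂ) * ∑' i : ℕ+ × ℕ+, JJF' k τ i z)) z := by
    have hg : HasDerivAt
        (fun w => (bernoulli (k+1) : ℂ) - ((k+1:ℕ):ℂ) * ∑' i : ℕ+ × ℕ+, JJF k τ i w)
        (-(((k+1:ℕ):ℂ) * ∑' i : ℕ+ × ℕ+, JJF' k τ i z)) z :=
      (hTz.const_mul (((k+1:ℕ):ℂ))).const_sub _
    exact hg.congr_of_eventuallyEq
      (Filter.eventuallyEq_of_mem (Metric.ball_mem_nhds z hδ) hJeqz)
  have hJτ : HasDerivAt (fun s => Jdef k z s)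
      (-(((k:ℕ):ℂ) * ∑' i : ℕ+ × ℕ+, JJG' k z i τ)) τ := by
    have hg : HasDerivAt
        (fun s => ((if k = 1 then pp z / (pp z - 1) else 0) + (bernoulli k : ℂ))
          - ((k:ℕ):ℂ) * ∑' i : ℕ+ × ℕ+, JJG k z i s)
        (-(((k:ℕ):ℂ) * ∑' i : ℕ+ × ℕ+, JJG' k z i τ)) τ :=
      (hTτ.const_mul (((k:ℕ):ℂ))).const_sub _
    exact hg.congr_of_eventuallyEq
      (Filter.eventuallyEq_of_mem (Metric.ball_mem_nhds τ hδ) hJeqτ)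
  -- termwise identity between the two derivative series
  have hSeq : (∑' i : ℕ+ × ℕ+, JJF' k τ i z) = ∑' i : ℕ+ × ℕ+, JJG' k z i τ := by
    apply tsum_congr
    intro i
    have hbk : ((i.2:ℕ):ℂ)^k = ((i.2:ℕ):ℂ)^(k-1) * ((i.2:ℕ):ℂ) := by
      rw [← pow_succ]
      congr 1
      omega
    have hsign : (-1:ℂ)^(k+1) = -((-1:ℂ)^k) := by rw [pow_succ]; ring
    simp only [JJF', JJG', hbk, hsign]
    push_cast
    ring
  -- finish
  simp only [dz, dτ']
  rw [hJz.deriv, hJτ.deriv, hSeq]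
  have hc0 : (2*(Real.pi:ℂ)*I) ≠ 0 := by
    simp [Real.pi_ne_zero, I_ne_zero, Complex.ofReal_ne_zero]
  have hk1 : ((k:ℂ)+1) ≠ 0 := Nat.cast_add_one_ne_zero k
  push_cast
  field_simp


end
end

section
/- For all integers λ, μ and all n ≥ 0, the deformed Eisenstein series satisfies the elliptic transformation law J_n(z + λτ + μ, τ) = Σ_{k=0}^{n} (-1)^{n+k} C(n,k) λ^{n-k} J_k(z,τ). -/
open Complex

noncomputable section

open Finset

lemma neg_one_pow_congr_mod {a b : ℕ} (h : a % 2 = b % 2) : ((-1:ℂ))^a = (-1)^b := by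
  conv_lhs => rw [← Nat.div_add_mod a 2]
  conv_rhs => rw [← Nat.div_add_mod b 2]
  rw [pow_add, pow_add, pow_mul, pow_mul, h]
  norm_num

lemma master {K : Type*} [NormedField K] [CompleteSpace K] (a c : ℕ) (b x : K)
    (hx : ‖x‖ < 1) : Summable (fun m : ℕ => ((m:K)+b)^a * x^(m+c)) := by
  have base : ∀ i : ℕ, Summable (fun m : ℕ =>
      ((a.choose i : K) * b^(a-i) * x^c) * ((m:K)^i * x^m)) := fun i =>
    (summable_pow_mul_geometric_of_norm_lt_one i hx).mul_left _
  refine (summable_sum (s := range (a+1)) (fun i _ => base i)).congr (fun m => ?_)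
  rw [add_pow, Finset.sum_mul, pow_add]
  refine Finset.sum_congr rfl (fun i _ => ?_)
  ring

lemma tsum_pnat1 (f : ℕ+ → ℂ) : ∑' r : ℕ+, f r = ∑' m : ℕ, f m.succPNat :=
  (Equiv.pnatEquivNat.symm.tsum_eq f).symm

lemma summable_pnat1 {f : ℕ+ → ℂ} (h : Summable (fun m : ℕ => f m.succPNat)) :
    Summable f := by
  have := Equiv.pnatEquivNat.symm.summable_iff (f := f)
  exact this.1 h

lemma summable_geom_pnat (y : ℂ) (hy : ‖y‖ < 1) : Summable (fun k : ℕ+ => y^(k:ℕ)) := by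
  apply summable_pnat1
  simp only [Nat.succPNat, PNat.mk_coe]
  have : Summable (fun m : ℕ => y * y^m) := (summable_geometric_of_norm_lt_one hy).mul_left y
  exact this.congr (fun m => by rw [← pow_succ'])

lemma tsum_geom_pnat (y : ℂ) (hy : ‖y‖ < 1) : ∑' k : ℕ+, y^(k:ℕ) = y * (1-y)⁻¹ := by
  rw [tsum_pnat1]
  simp only [Nat.succPNat, PNat.mk_coe]
  calc ∑' m : ℕ, y^(m+1) = ∑' m : ℕ, y * y^m := by
        exact tsum_congr (fun m => by rw [← pow_succ'])
    _ = y * ∑' m : ℕ, y^m := tsum_mul_left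
    _ = y * (1-y)⁻¹ := by rw [tsum_geometric_of_norm_lt_one hy]

lemma P2 {n : ℕ} (hn : n ≠ 0) (r : ℂ) :
    (n:ℂ) * (r+1)^(n-1) = ∑ j ∈ range (n+1), (j:ℂ) * (n.choose j) * r^(j-1) := by
  rw [Finset.sum_range_succ']
  simp only [Nat.cast_zero, zero_mul, add_zero]
  rw [add_pow, Finset.mul_sum]
  have hrange : n - 1 + 1 = n := Nat.succ_pred_eq_of_ne_zero hn
  rw [hrange]
  refine Finset.sum_congr rfl (fun i hi => ?_)
  have hi' : i < n := Finset.mem_range.1 hi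
  have key : (i+1) * (n.choose (i+1)) = n * ((n-1).choose i) := by
    have e : n - 1 + 1 = n := Nat.succ_pred_eq_of_ne_zero hn
    have := Nat.add_one_mul_choose_eq (n-1) i
    rw [e] at this
    rw [this, Nat.mul_comm]
  have keyC : ((i:ℂ)+1) * (n.choose (i+1)) = (n:ℂ) * ((n-1).choose i) := by
    exact_mod_cast congrArg (Nat.cast (R := ℂ)) key
  push_cast
  push_cast at keyC
  calc (n:ℂ) * (r^i * 1^(n-1-i) * ((n-1).choose i)) 
      = ((n:ℂ) * ((n-1).choose i)) * r^i := by ring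
    _ = (((i:ℂ)+1) * (n.choose (i+1))) * r^i := by rw [← keyC]
    _ = ((i:ℂ)+1) * (n.choose (i+1)) * r^(i+1-1) := by norm_num

lemma P1 {n : ℕ} (hn : n ≠ 0) (r : ℂ) :
    (n:ℂ) * (r-1)^(n-1)
      = ∑ j ∈ range (n+1), (-1:ℂ)^(n+j) * j * (n.choose j) * r^(j-1) := by
  rw [Finset.sum_range_succ']
  simp only [Nat.cast_zero, mul_zero, zero_mul, add_zero]
  have : r - 1 = r + (-1) := by ring
  rw [this, add_pow, Finset.mul_sum]
  have hrange : n - 1 + 1 = n := Nat.succ_pred_eq_of_ne_zero hn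
  rw [hrange]
  refine Finset.sum_congr rfl (fun i hi => ?_)
  have hi' : i < n := Finset.mem_range.1 hi
  have key : (i+1) * (n.choose (i+1)) = n * ((n-1).choose i) := by
    have e : n - 1 + 1 = n := Nat.succ_pred_eq_of_ne_zero hn
    have := Nat.add_one_mul_choose_eq (n-1) i
    rw [e] at this
    rw [this, Nat.mul_comm]
  have keyC : ((i:ℂ)+1) * (n.choose (i+1)) = (n:ℂ) * ((n-1).choose i) := by
    exact_mod_cast congrArg (Nat.cast (R := ℂ)) key
  have hsign : ((-1:ℂ))^(n+(i+1)) = (-1:ℂ)^(n-1-i) := by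
    apply neg_one_pow_congr_mod; omega
  push_cast at keyC ⊢
  calc (n:ℂ) * (r^i * (-1)^(n-1-i) * ((n-1).choose i))
      = ((n:ℂ) * ((n-1).choose i)) * (-1)^(n-1-i) * r^i := by ring
    _ = (((i:ℂ)+1) * (n.choose (i+1))) * (-1)^(n+(i+1)) * r^i := by rw [← keyC, hsign]
    _ = (-1:ℂ)^(n+(i+1)) * ((i:ℂ)+1) * (n.choose (i+1)) * r^(i+1-1) := by
        rw [Nat.add_sub_cancel]; ring

section part2
variable {n : ℕ}

/-- `S j x = ∑_{r≥1} r^{j-1} x^r` in shifted form. -/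
def Scal (j : ℕ) (x : ℂ) : ℂ := ∑' m:ℕ, ((m:ℂ)+1)^(j-1) * x^(m+1)

lemma summable_Scal (j : ℕ) {x : ℂ} (hx : ‖x‖ < 1) :
    Summable (fun m:ℕ => ((m:ℂ)+1)^(j-1) * x^(m+1)) := master (j-1) 1 1 x hx

lemma inner_key (hn : n ≠ 0) (u v x : ℂ) (hx : ‖x‖ < 1) :
    (n:ℂ) * ∑' m:ℕ, ((m:ℂ)+1)^(n-1) * (u * x^(m+2) + (-1:ℂ)^n * v * x^m)
      = -(if n = 1 then u*x else 0) + (-1:ℂ)^n * n * v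
        + ∑ j ∈ range (n+1), (-1:ℂ)^(n+j) * j * (n.choose j)
            * ((u + (-1:ℂ)^j * v) * Scal j x) := by
  have hS := fun j => summable_Scal j hx
  have hA : Summable (fun m:ℕ => ((m:ℂ)+1)^(n-1) * x^(m+2)) := master (n-1) 2 1 x hx
  have hB : Summable (fun m:ℕ => ((m:ℂ)+1)^(n-1) * x^m) :=
    (master (n-1) 0 1 x hx).congr (fun m => rfl)
  have split : ∑' m:ℕ, ((m:ℂ)+1)^(n-1) * (u * x^(m+2) + (-1:ℂ)^n * v * x^m)
      = u * (∑' m:ℕ, ((m:ℂ)+1)^(n-1) * x^(m+2))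
        + ((-1:ℂ)^n * v) * (∑' m:ℕ, ((m:ℂ)+1)^(n-1) * x^m) := by
    rw [← tsum_mul_left, ← tsum_mul_left, ← Summable.tsum_add (hA.mul_left u)
      (hB.mul_left ((-1:ℂ)^n * v))]
    exact tsum_congr (fun m => by ring)
  -- the shifted tail sum
  have e2 : ∀ j : ℕ, ∑' m:ℕ, (((m:ℂ)+2)^(j-1) * x^(m+2)) = Scal j x - x := by
    intro j
    have h0 := Summable.tsum_eq_zero_add (hS j)
    have e3 : ∑' m:ℕ, ((((m+1:ℕ)):ℂ)+1)^(j-1) * x^(m+1+1)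
        = ∑' m:ℕ, (((m:ℂ)+2)^(j-1) * x^(m+2)) :=
      tsum_congr (fun m => by push_cast; ring_nf)
    rw [e3] at h0
    simp only [Nat.cast_zero, zero_add, one_pow, pow_one] at h0
    rw [Scal, h0]; simp
  -- n * A
  have hnA : (n:ℂ) * (∑' m:ℕ, ((m:ℂ)+1)^(n-1) * x^(m+2))
      = (∑ j ∈ range (n+1), (-1:ℂ)^(n+j) * j * (n.choose j) * Scal j x)
        - (if n = 1 then (1:ℂ) else 0) * x := by
    have e1 : (n:ℂ) * (∑' m:ℕ, ((m:ℂ)+1)^(n-1) * x^(m+2))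
        = ∑' m:ℕ, ∑ j ∈ range (n+1),
            ((-1:ℂ)^(n+j) * j * (n.choose j)) * (((m:ℂ)+2)^(j-1) * x^(m+2)) := by
      rw [← tsum_mul_left]
      refine tsum_congr (fun m => ?_)
      have hp := P1 hn ((m:ℂ)+2)
      have e : ((m:ℂ)+2) - 1 = (m:ℂ)+1 := by ring
      rw [e] at hp
      calc (n:ℂ) * (((m:ℂ)+1)^(n-1) * x^(m+2))
          = ((n:ℂ) * ((m:ℂ)+1)^(n-1)) * x^(m+2) := by ring
        _ = (∑ j ∈ range (n+1), (-1:ℂ)^(n+j) * j * (n.choose j) * ((m:ℂ)+2)^(j-1)) * x^(m+2) := by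
            rw [hp]
        _ = _ := by rw [Finset.sum_mul]; exact Finset.sum_congr rfl (fun j _ => by ring)
    have sumc : ∑ j ∈ range (n+1), (-1:ℂ)^(n+j) * j * (n.choose j)
        = if n = 1 then (1:ℂ) else 0 := by
      have h := P1 hn (1:ℂ)
      simp only [sub_self, one_pow, mul_one] at h
      rcases eq_or_ne n 1 with h1 | h1
      · subst h1; simpa using h.symm
      · rw [zero_pow (by omega : n-1 ≠ 0), mul_zero] at h
        simp [h1, ← h]
    rw [e1, Summable.tsum_finsetSum (fun j _ => ((master (j-1) 2 2 x hx).congr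
      (fun m => by push_cast; ring_nf)).mul_left _)]
    calc ∑ j ∈ range (n+1), ∑' m:ℕ,
            ((-1:ℂ)^(n+j) * j * (n.choose j)) * (((m:ℂ)+2)^(j-1) * x^(m+2))
        = ∑ j ∈ range (n+1), ((-1:ℂ)^(n+j) * j * (n.choose j)) * (Scal j x - x) := by
          refine Finset.sum_congr rfl (fun j _ => ?_)
          rw [tsum_mul_left, e2 j]
      _ = (∑ j ∈ range (n+1), (-1:ℂ)^(n+j) * j * (n.choose j) * Scal j x)
            - (∑ j ∈ range (n+1), (-1:ℂ)^(n+j) * j * (n.choose j)) * x := by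
          rw [Finset.sum_mul, ← Finset.sum_sub_distrib]
          exact Finset.sum_congr rfl (fun j _ => by ring)
      _ = _ := by rw [sumc]
  -- n * B
  have hnB : (n:ℂ) * (∑' m:ℕ, ((m:ℂ)+1)^(n-1) * x^m)
      = (n:ℂ) + ∑ j ∈ range (n+1), ((j:ℂ) * (n.choose j)) * Scal j x := by
    have hSB : ∀ j : ℕ, Summable (fun m:ℕ => (m:ℂ)^(j-1) * x^m) :=
      fun j => summable_pow_mul_geometric_of_norm_lt_one (j-1) hx
    have e1 : (n:ℂ) * (∑' m:ℕ, ((m:ℂ)+1)^(n-1) * x^m)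
        = ∑' m:ℕ, ∑ j ∈ range (n+1), ((j:ℂ) * (n.choose j)) * ((m:ℂ)^(j-1) * x^m) := by
      rw [← tsum_mul_left]
      refine tsum_congr (fun m => ?_)
      have hp := P2 hn ((m:ℂ))
      calc (n:ℂ) * (((m:ℂ)+1)^(n-1) * x^m)
          = ((n:ℂ) * ((m:ℂ)+1)^(n-1)) * x^m := by ring
        _ = (∑ j ∈ range (n+1), (j:ℂ) * (n.choose j) * (m:ℂ)^(j-1)) * x^m := by rw [hp]
        _ = _ := by rw [Finset.sum_mul]; exact Finset.sum_congr rfl (fun j _ => by ring)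
    have e2' : ∀ j : ℕ, ∑' m:ℕ, ((m:ℂ)^(j-1) * x^m) = (0:ℂ)^(j-1) + Scal j x := by
      intro j
      rw [Summable.tsum_eq_zero_add (hSB j), Scal]
      try push_cast
      try norm_num
    have sumd : ∑ j ∈ range (n+1), ((j:ℂ) * (n.choose j)) * (0:ℂ)^(j-1) = (n:ℂ) := by
      have h := P2 hn (0:ℂ)
      norm_num at h
      rw [← h]
    rw [e1, Summable.tsum_finsetSum (fun j _ => (hSB j).mul_left _)]
    calc ∑ j ∈ range (n+1), ∑' m:ℕ, ((j:ℂ) * (n.choose j)) * ((m:ℂ)^(j-1) * x^m)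
        = ∑ j ∈ range (n+1), ((j:ℂ) * (n.choose j)) * ((0:ℂ)^(j-1) + Scal j x) := by
          refine Finset.sum_congr rfl (fun j _ => ?_)
          rw [tsum_mul_left, e2' j]
      _ = (∑ j ∈ range (n+1), ((j:ℂ) * (n.choose j)) * (0:ℂ)^(j-1))
            + ∑ j ∈ range (n+1), ((j:ℂ) * (n.choose j)) * Scal j x := by
          rw [← Finset.sum_add_distrib]
          exact Finset.sum_congr rfl (fun j _ => by ring)
      _ = _ := by rw [sumd]
  -- assemble
  rw [split, mul_add, ← mul_assoc, ← mul_assoc, mul_comm (n:ℂ) u,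
    mul_comm (n:ℂ) ((-1:ℂ)^n * v), mul_assoc u, mul_assoc, hnA, hnB]
  have key : ∀ j ∈ range (n+1),
      (-1:ℂ)^(n+j) * j * (n.choose j) * ((u + (-1:ℂ)^j * v) * Scal j x)
        = u * ((-1:ℂ)^(n+j) * j * (n.choose j) * Scal j x)
          + ((-1:ℂ)^n * v) * (((j:ℂ) * (n.choose j)) * Scal j x) := by
    intro j _
    have hsgn : (-1:ℂ)^(n+j) * (-1:ℂ)^j = (-1:ℂ)^n := by
      rw [← pow_add]
      apply neg_one_pow_congr_mod; omega
    calc (-1:ℂ)^(n+j) * j * (n.choose j) * ((u + (-1:ℂ)^j * v) * Scal j x)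
        = u * ((-1:ℂ)^(n+j) * j * (n.choose j) * Scal j x)
          + ((-1:ℂ)^(n+j) * (-1:ℂ)^j) * v * ((j:ℂ) * (n.choose j) * Scal j x) := by ring
      _ = _ := by rw [hsgn]; try ring
  rw [Finset.sum_congr rfl key, Finset.sum_add_distrib, ← Finset.mul_sum, ← Finset.mul_sum]
  rcases eq_or_ne n 1 with h1 | h1 <;> simp only [h1, if_true, if_false] <;> ring
end part2

section part3

lemma Bsum (n : ℕ) : ∑ j ∈ range (n+1), (-1:ℂ)^(n+j) * (n.choose j) * (bernoulli j : ℂ)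
    = (bernoulli n : ℂ) + (-1)^n * n := by
  have key : ∑ j ∈ range (n+1), (-1:ℚ)^(n+j) * (n.choose j) * (bernoulli j)
      = (bernoulli n : ℚ) + (-1)^n * n := by
    have e1 : ∀ j, (-1:ℚ)^(n+j) * (n.choose j) * (bernoulli j)
        = (-1:ℚ)^n * ((n.choose j) * bernoulli' j) := by
      intro j
      rw [bernoulli, pow_add]
      ring_nf
      simp [neg_one_sq]
    rw [Finset.sum_congr rfl (fun j _ => e1 j), ← Finset.mul_sum,
      Finset.sum_range_succ, sum_bernoulli', Nat.choose_self, bernoulli]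
    push_cast
    ring
  exact_mod_cast key

/-- abstract deformed Eisenstein series in terms of `p`, `q`. -/
def Jab (n : ℕ) (P Q : ℂ) : ℂ :=
  (if n = 1 then P / (P - 1) else 0) + (bernoulli n : ℂ)
    - n * ∑' (k : ℕ+) (r : ℕ+),
        (r : ℂ) ^ (n - 1) * (P ^ (k : ℕ) + (-1 : ℂ) ^ n * P ^ (-(k : ℤ)))
          * Q ^ ((k : ℕ) * (r : ℕ))

lemma inner_rewrite (j : ℕ) (p q : ℂ) (hp0 : p ≠ 0) (k : ℕ+) :
    ∑' r:ℕ+, (r:ℂ)^(j-1) * (p^(k:ℕ) + (-1:ℂ)^j * p^(-(k:ℤ))) * q^((k:ℕ)*(r:ℕ))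
    = (p^(k:ℕ) + (-1:ℂ)^j * (p⁻¹)^(k:ℕ)) * Scal j (q^(k:ℕ)) := by
  rw [tsum_pnat1, Scal, ← tsum_mul_left]
  refine tsum_congr (fun m => ?_)
  have h1 : ((m.succPNat : ℕ+):ℕ) = m+1 := Nat.succPNat_coe m
  rw [h1]
  push_cast
  rw [pow_mul, zpow_neg, zpow_natCast, inv_pow]
  ring

lemma claimA (n:ℕ) (p q : ℂ) (hp0 : p ≠ 0) (hq0 : q ≠ 0) (k:ℕ+) :
    ∑' r:ℕ+, (r:ℂ)^(n-1) * ((p*q)^(k:ℕ) + (-1:ℂ)^n * (p*q)^(-(k:ℤ))) * q^((k:ℕ)*(r:ℕ))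
    = ∑' m:ℕ, ((m:ℂ)+1)^(n-1)
        * (p^(k:ℕ) * (q^(k:ℕ))^(m+2) + (-1:ℂ)^n * (p⁻¹)^(k:ℕ) * (q^(k:ℕ))^m) := by
  rw [tsum_pnat1]
  refine tsum_congr (fun m => ?_)
  have h1 : ((m.succPNat : ℕ+):ℕ) = m+1 := Nat.succPNat_coe m
  have hqk : q^(k:ℕ) ≠ 0 := pow_ne_zero _ hq0
  have hpk : p^(k:ℕ) ≠ 0 := pow_ne_zero _ hp0
  rw [h1]
  push_cast
  rw [pow_mul, zpow_neg, zpow_natCast, mul_pow, inv_pow]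
  field_simp
  ring
end part3

section part4
variable {p q : ℂ}

lemma norm_Scal_term (j : ℕ) (x : ℂ) (m : ℕ) :
    ‖((m:ℂ)+1)^(j-1) * x^(m+1)‖ = ((m:ℝ)+1)^(j-1) * ‖x‖^(m+1) := by
  rw [norm_mul, norm_pow, norm_pow]
  congr 2
  have : ((m:ℂ)+1) = ((m+1 : ℕ) : ℂ) := by push_cast; ring
  rw [this, Complex.norm_natCast]
  push_cast
  ring

lemma summable_Scal_real (j : ℕ) {y : ℝ} (hy0 : 0 ≤ y) (hy : y < 1) :
    Summable (fun m:ℕ => ((m:ℝ)+1)^(j-1) * y^m) := by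
  have := master (K := ℝ) (j-1) 0 1 y (by rwa [Real.norm_of_nonneg hy0])
  exact this.congr (fun m => rfl)

lemma norm_Scal_le (j : ℕ) (hq : ‖q‖ < 1) (k : ℕ+) :
    ‖Scal j (q^(k:ℕ))‖ ≤ ‖q‖^(k:ℕ) * ∑' m:ℕ, ((m:ℝ)+1)^(j-1) * ‖q‖^m := by
  have hqknorm : ‖q^(k:ℕ)‖ < 1 :=
    by rw [norm_pow]; exact pow_lt_one₀ (norm_nonneg q) hq k.pos.ne'
  have hsn : Summable (fun m:ℕ => ‖((m:ℂ)+1)^(j-1) * (q^(k:ℕ))^(m+1)‖) := by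
    refine ((master (K := ℝ) (j-1) 1 1 ‖q^(k:ℕ)‖ ?_)).congr (fun m => ?_)
    · rwa [Real.norm_of_nonneg (norm_nonneg _)]
    · rw [norm_Scal_term]
  have hD : Summable (fun m:ℕ => ((m:ℝ)+1)^(j-1) * ‖q‖^m) :=
    summable_Scal_real j (norm_nonneg q) hq
  calc ‖Scal j (q^(k:ℕ))‖ ≤ ∑' m:ℕ, ‖((m:ℂ)+1)^(j-1) * (q^(k:ℕ))^(m+1)‖ :=
        norm_tsum_le_tsum_norm hsn
    _ ≤ ∑' m:ℕ, ‖q‖^(k:ℕ) * (((m:ℝ)+1)^(j-1) * ‖q‖^m) := by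
        refine Summable.tsum_le_tsum (fun m => ?_) hsn (hD.mul_left _)
        rw [norm_Scal_term, norm_pow]
        have e1 : (‖q‖^(k:ℕ))^(m+1) = ‖q‖^((k:ℕ)*(m+1)) := by rw [← pow_mul]
        have e2 : ‖q‖^((k:ℕ)*(m+1)) ≤ ‖q‖^((k:ℕ)+m) := by
          apply pow_le_pow_of_le_one (norm_nonneg q) hq.le
          have := k.pos
          nlinarith
        calc ((m:ℝ)+1)^(j-1) * (‖q‖^(k:ℕ))^(m+1)
            ≤ ((m:ℝ)+1)^(j-1) * ‖q‖^((k:ℕ)+m) := by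
              rw [e1]
              apply mul_le_mul_of_nonneg_left e2
              positivity
          _ = ‖q‖^(k:ℕ) * (((m:ℝ)+1)^(j-1) * ‖q‖^m) := by rw [pow_add]; ring
    _ = ‖q‖^(k:ℕ) * ∑' m:ℕ, ((m:ℝ)+1)^(j-1) * ‖q‖^m := tsum_mul_left

lemma summable_pnat_real {f : ℕ → ℝ} (hf : Summable f) :
    Summable (fun k:ℕ+ => f (k:ℕ)) :=
  hf.comp_injective PNat.coe_injective

lemma sumW (j : ℕ) (hq : ‖q‖ < 1) (hp1 : 1 < ‖p‖) (hpq : ‖p‖ * ‖q‖ < 1) :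
    Summable (fun k:ℕ+ => (p^(k:ℕ) + (-1:ℂ)^j * (p⁻¹)^(k:ℕ)) * Scal j (q^(k:ℕ))) := by
  set D : ℝ := ∑' m:ℕ, ((m:ℝ)+1)^(j-1) * ‖q‖^m with hD
  have hD0 : 0 ≤ D := tsum_nonneg (fun m => by positivity)
  have hpinvq : ‖p‖⁻¹ * ‖q‖ < 1 := by
    have h1 : ‖p‖⁻¹ < 1 := inv_lt_one_of_one_lt₀ hp1
    have h2 : 0 ≤ ‖p‖⁻¹ := by positivity
    nlinarith [norm_nonneg q]
  have hg : Summable (fun k:ℕ+ => (‖p‖*‖q‖)^(k:ℕ) * D + (‖p‖⁻¹*‖q‖)^(k:ℕ) * D) := by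
    have hg1 : Summable (fun n:ℕ => (‖p‖*‖q‖)^n * D) :=
      (summable_geometric_of_lt_one (by positivity) hpq).mul_right D
    have hg2 : Summable (fun n:ℕ => (‖p‖⁻¹*‖q‖)^n * D) :=
      (summable_geometric_of_lt_one (by positivity) hpinvq).mul_right D
    exact (summable_pnat_real (f := fun n => (‖p‖*‖q‖)^n * D) hg1).add
      (summable_pnat_real (f := fun n => (‖p‖⁻¹*‖q‖)^n * D) hg2)
  refine Summable.of_norm_bounded hg (fun k => ?_)
  have hb := norm_Scal_le j hq k
  calc ‖(p^(k:ℕ) + (-1:ℂ)^j * (p⁻¹)^(k:ℕ)) * Scal j (q^(k:ℕ))‖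
      = ‖p^(k:ℕ) + (-1:ℂ)^j * (p⁻¹)^(k:ℕ)‖ * ‖Scal j (q^(k:ℕ))‖ := norm_mul _ _
    _ ≤ (‖p‖^(k:ℕ) + ‖p‖⁻¹^(k:ℕ)) * (‖q‖^(k:ℕ) * D) := by
        apply mul_le_mul _ hb (norm_nonneg _) (by positivity)
        calc ‖p^(k:ℕ) + (-1:ℂ)^j * (p⁻¹)^(k:ℕ)‖
            ≤ ‖p^(k:ℕ)‖ + ‖(-1:ℂ)^j * (p⁻¹)^(k:ℕ)‖ := norm_add_le _ _
          _ = ‖p‖^(k:ℕ) + ‖p‖⁻¹^(k:ℕ) := by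
              rw [norm_mul, norm_pow, norm_pow, norm_pow, norm_inv, norm_neg, norm_one,
                one_pow, one_mul]
    _ = (‖p‖*‖q‖)^(k:ℕ) * D + (‖p‖⁻¹*‖q‖)^(k:ℕ) * D := by
        rw [mul_pow, mul_pow]; ring
end part4

section part5
variable {p q : ℂ}

lemma perk {n : ℕ} (hn : n ≠ 0) (hp0 : p ≠ 0) (hq0 : q ≠ 0) (hq : ‖q‖ < 1) (k : ℕ+) :
    (n:ℂ) * ∑' r:ℕ+, (r:ℂ)^(n-1) * ((p*q)^(k:ℕ) + (-1:ℂ)^n * (p*q)^(-(k:ℤ))) * q^((k:ℕ)*(r:ℕ))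
    = (-(if n = 1 then (1:ℂ) else 0)) * (p*q)^(k:ℕ)
      + ((-1:ℂ)^n * n) * (p⁻¹)^(k:ℕ)
      + ∑ j ∈ range (n+1), ((-1:ℂ)^(n+j) * j * (n.choose j))
          * ((p^(k:ℕ) + (-1:ℂ)^j * (p⁻¹)^(k:ℕ)) * Scal j (q^(k:ℕ))) := by
  have hxk : ‖q^(k:ℕ)‖ < 1 := by
    rw [norm_pow]; exact pow_lt_one₀ (norm_nonneg q) hq k.pos.ne'
  rw [claimA n p q hp0 hq0 k,
    inner_key hn (p^(k:ℕ)) ((p⁻¹)^(k:ℕ)) (q^(k:ℕ)) hxk]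
  have front : -(if n = 1 then p^(k:ℕ)*(q^(k:ℕ)) else 0)
      = (-(if n = 1 then (1:ℂ) else 0)) * (p*q)^(k:ℕ) := by
    rcases eq_or_ne n 1 with h|h <;> simp [h, mul_pow]
  rw [front]

lemma Jab_transform {n : ℕ} (hq0 : q ≠ 0) (hq : ‖q‖ < 1)
    (hp1 : 1 < ‖p‖) (hpq : ‖p‖ * ‖q‖ < 1) (hp : p ≠ 1) (hpq1 : p*q ≠ 1) :
    Jab n (p*q) q = ∑ j ∈ range (n+1), (-1:ℂ)^(n+j) * (n.choose j) * Jab j p q := by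
  have hp0 : p ≠ 0 := by
    intro h
    rw [h] at hp1
    simp at hp1
    linarith
  rcases eq_or_ne n 0 with rfl | hn
  · simp [Jab]
  have hnormpq : ‖p*q‖ < 1 := by rw [norm_mul]; exact hpq
  have hnormpinv : ‖p⁻¹‖ < 1 := by rw [norm_inv]; exact inv_lt_one_of_one_lt₀ hp1
  have key : (n:ℂ) * (∑' (k:ℕ+) (r:ℕ+), (r:ℂ)^(n-1)
        * ((p*q)^(k:ℕ) + (-1:ℂ)^n * (p*q)^(-(k:ℤ))) * q^((k:ℕ)*(r:ℕ)))
      = (-(if n = 1 then (1:ℂ) else 0)) * ((p*q) * (1-(p*q))⁻¹)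
        + ((-1:ℂ)^n * n) * (p⁻¹ * (1-p⁻¹)⁻¹)
        + ∑ j ∈ range (n+1), ((-1:ℂ)^(n+j) * j * (n.choose j))
            * (∑' k:ℕ+, ((p^(k:ℕ) + (-1:ℂ)^j * (p⁻¹)^(k:ℕ)) * Scal j (q^(k:ℕ)))) := by
    rw [← tsum_mul_left]
    rw [tsum_congr (fun k => perk hn hp0 hq0 hq k)]
    have sa : Summable (fun k:ℕ+ => (-(if n = 1 then (1:ℂ) else 0)) * (p*q)^(k:ℕ)) :=
      (summable_geom_pnat _ hnormpq).mul_left _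
    have sb : Summable (fun k:ℕ+ => ((-1:ℂ)^n * n) * (p⁻¹)^(k:ℕ)) :=
      (summable_geom_pnat _ hnormpinv).mul_left _
    have sw : ∀ j ∈ range (n+1), Summable (fun k:ℕ+ =>
        ((-1:ℂ)^(n+j) * j * (n.choose j))
          * ((p^(k:ℕ) + (-1:ℂ)^j * (p⁻¹)^(k:ℕ)) * Scal j (q^(k:ℕ)))) :=
      fun j _ => (sumW j hq hp1 hpq).mul_left _
    have sc : Summable (fun k:ℕ+ => ∑ j ∈ range (n+1),
        ((-1:ℂ)^(n+j) * j * (n.choose j))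
          * ((p^(k:ℕ) + (-1:ℂ)^j * (p⁻¹)^(k:ℕ)) * Scal j (q^(k:ℕ)))) :=
      summable_sum sw
    rw [Summable.tsum_add (sa.add sb) sc, Summable.tsum_add sa sb, tsum_mul_left, tsum_mul_left,
      tsum_geom_pnat _ hnormpq, tsum_geom_pnat _ hnormpinv, Summable.tsum_finsetSum sw]
    congr 1
    exact Finset.sum_congr rfl (fun j _ => tsum_mul_left)
  have RHSrw : ∀ j ∈ range (n+1), (-1:ℂ)^(n+j) * (n.choose j) * Jab j p q
      = (-1:ℂ)^(n+j) * (n.choose j) * (if j = 1 then p/(p-1) else 0)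
        + (-1:ℂ)^(n+j) * (n.choose j) * (bernoulli j : ℂ)
        - ((-1:ℂ)^(n+j) * j * (n.choose j))
            * (∑' k:ℕ+, ((p^(k:ℕ) + (-1:ℂ)^j * (p⁻¹)^(k:ℕ)) * Scal j (q^(k:ℕ)))) := by
    intro j _
    rw [Jab, tsum_congr (fun k => inner_rewrite j p q hp0 k)]
    ring
  have hT1 : ∑ j ∈ range (n+1), (-1:ℂ)^(n+j) * (n.choose j) * (if j = 1 then p/(p-1) else 0)
      = (-1:ℂ)^(n+1) * n * (p/(p-1)) := by
    rw [Finset.sum_eq_single_of_mem 1 (Finset.mem_range.2 (by omega))]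
    · rw [if_pos rfl, Nat.choose_one_right]
    · intro b _ hb
      simp [hb]
  have e1 : (p*q) * (1-(p*q))⁻¹ = -((p*q)/((p*q)-1)) := by
    rw [show (1-(p*q)) = -((p*q)-1) by ring, inv_neg, div_eq_mul_inv]
    ring
  have e2 : p⁻¹ * (1-p⁻¹)⁻¹ = p/(p-1) - 1 := by
    have h1 : p - 1 ≠ 0 := sub_ne_zero_of_ne hp
    field_simp
    ring
  rw [Jab, key, Finset.sum_congr rfl RHSrw, Finset.sum_sub_distrib,
    Finset.sum_add_distrib, hT1, Bsum, e1, e2]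
  rcases eq_or_ne n 1 with h|h
  · subst h; simp only [if_pos]; ring
  · simp only [if_neg h]; ring
end part5

section part6

lemma Jab_inv (n : ℕ) (p q : ℂ) (hp0 : p ≠ 0) (hp : p ≠ 1) :
    Jab n p⁻¹ q = (-1:ℂ)^n * Jab n p q := by
  have hs : ((-1:ℂ)^n)^2 = 1 := by
    rw [← pow_mul, mul_comm, pow_mul]
    simp
  have hterm : ∀ (k r : ℕ+),
      (r:ℂ)^(n-1) * ((p⁻¹)^(k:ℕ) + (-1:ℂ)^n * (p⁻¹)^(-(k:ℤ))) * q^((k:ℕ)*(r:ℕ))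
      = (-1:ℂ)^n * ((r:ℂ)^(n-1) * (p^(k:ℕ) + (-1:ℂ)^n * p^(-(k:ℤ))) * q^((k:ℕ)*(r:ℕ))) := by
    intro k r
    rw [inv_pow, zpow_neg, inv_zpow, inv_inv, zpow_natCast, zpow_neg, zpow_natCast]
    linear_combination (-((r:ℂ)^(n-1) * (p^(k:ℕ))⁻¹ * q^((k:ℕ)*(r:ℕ)))) * hs
  have hsum : (∑' (k:ℕ+) (r:ℕ+),
      (r:ℂ)^(n-1) * ((p⁻¹)^(k:ℕ) + (-1:ℂ)^n * (p⁻¹)^(-(k:ℤ))) * q^((k:ℕ)*(r:ℕ)))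
      = (-1:ℂ)^n * ∑' (k:ℕ+) (r:ℕ+),
          (r:ℂ)^(n-1) * (p^(k:ℕ) + (-1:ℂ)^n * p^(-(k:ℤ))) * q^((k:ℕ)*(r:ℕ)) := by
    rw [← tsum_mul_left]
    exact tsum_congr (fun k => by rw [tsum_congr (hterm k), tsum_mul_left])
  have front : (if n = 1 then p⁻¹/(p⁻¹-1) else 0) + (bernoulli n : ℂ)
      = (-1:ℂ)^n * (if n = 1 then p/(p-1) else 0) + (-1:ℂ)^n * (bernoulli n : ℂ) := by
    rcases eq_or_ne n 1 with h|h
    · subst h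
      simp only [if_pos, bernoulli_one, pow_one]
      have h1 : p - 1 ≠ 0 := sub_ne_zero_of_ne hp
      have h1' : 1 - p ≠ 0 := fun hcon => hp (by linear_combination -hcon)
      have h2 : p⁻¹ - 1 ≠ 0 := by
        intro hcon
        apply hp
        have : p⁻¹ = 1 := by linear_combination hcon
        rwa [inv_eq_one] at this
      field_simp
      ring
    · simp only [if_neg h]
      have hB : ((-1:ℚ)^n) * bernoulli n = bernoulli n := by
        rcases Nat.even_or_odd n with he|ho
        · rw [he.neg_one_pow, one_mul]
        · have h3 : 1 < n := by
            rcases ho with ⟨c,hc⟩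
            omega
          rw [bernoulli_eq_bernoulli'_of_ne_one h, bernoulli'_eq_zero_of_odd ho h3, mul_zero]
      have hBC : ((-1:ℂ)^n) * (bernoulli n : ℂ) = (bernoulli n : ℂ) := by exact_mod_cast hB
      rw [hBC]
      ring
  rw [Jab, Jab, hsum]
  linear_combination front

lemma qq_ne (τ : ℂ) : qq τ ≠ 0 := Complex.exp_ne_zero _
lemma pp_ne (z : ℂ) : pp z ≠ 0 := Complex.exp_ne_zero _

lemma pp_add (z w : ℂ) : pp (z+w) = pp z * pp w := by
  rw [pp, pp, pp, ← Complex.exp_add]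
  congr 1
  ring

lemma pp_int_mul (lam : ℤ) (τ : ℂ) : pp ((lam:ℂ) * τ) = qq τ ^ lam := by
  rw [pp, qq, ← Complex.exp_int_mul]
  congr 1
  ring

lemma pp_intcast (mu : ℤ) : pp (mu:ℂ) = 1 := by
  rw [pp]
  have := Complex.exp_int_mul_two_pi_mul_I mu
  rw [← this]
  congr 1
  ring

lemma abs_qq_lt {τ : ℂ} (hτ : 0 < τ.im) : ‖qq τ‖ < 1 := by
  rw [qq, Complex.norm_exp, Real.exp_lt_one_iff]
  have : (2*(Real.pi:ℂ)*Complex.I*τ).re = -(2*Real.pi*τ.im) := by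
    simp [Complex.mul_re, Complex.mul_im]
  rw [this]
  have := Real.pi_pos
  nlinarith

lemma pp_shift (z τ : ℂ) (lam mu : ℤ) :
    pp (z + lam * τ + mu) = pp z * qq τ ^ lam := by
  rw [pp_add, pp_add, pp_int_mul, pp_intcast, mul_one]

end part6


/-- elliptic transformation law of the deformed Eisenstein series. -/
theorem deformed_eisenstein_elliptic (n : ℕ) (lam mu : ℤ) (z τ : ℂ) (hτ : 0 < τ.im)
    (h1 : ‖qq τ‖ < ‖pp z‖)
    (h2 : ‖pp z‖ < (‖qq τ‖)⁻¹)
    (hp : pp z ≠ 1)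
    (h1' : ‖qq τ‖ < ‖pp (z + lam * τ + mu)‖)
    (h2' : ‖pp (z + lam * τ + mu)‖ < (‖qq τ‖)⁻¹)
    (hp' : pp (z + lam * τ + mu) ≠ 1) :
    Jdef n (z + lam * τ + mu) τ
      = ∑ k ∈ Finset.range (n + 1),
          (-1 : ℂ) ^ (n + k) * (n.choose k : ℂ) * (lam : ℂ) ^ (n - k) * Jdef k z τ := by
  have hJ : ∀ (m:ℕ) (w : ℂ), Jdef m w τ = Jab m (pp w) (qq τ) := fun _ _ => rfl
  have haq : ‖qq τ‖ < 1 := abs_qq_lt hτ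
  have haq0 : 0 < ‖qq τ‖ := norm_pos_iff.mpr (qq_ne τ)
  have hap0 : 0 < ‖pp z‖ := norm_pos_iff.mpr (pp_ne z)
  have hP := pp_shift z τ lam mu
  have hnq : ‖qq τ‖ = ‖qq τ‖ := rfl
  have hnp : ‖pp z‖ = ‖pp z‖ := rfl
  have habs' : ‖pp z * qq τ ^ lam‖
      = ‖pp z‖ * (‖qq τ‖)^lam := by
    rw [norm_mul, norm_zpow]
  rw [hP] at h1' h2' hp'
  rw [habs'] at h1' h2'
  have hlam : lam = -1 ∨ lam = 0 ∨ lam = 1 := by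
    by_contra hcon
    push_neg at hcon
    obtain ⟨hm1, h0, hpl1⟩ := hcon
    rcases lt_or_gt_of_ne h0 with hneg | hpos
    · have hle : lam ≤ -2 := by omega
      have k1 : (‖qq τ‖)^(-2:ℤ) ≤ (‖qq τ‖)^lam :=
        zpow_le_zpow_right_of_le_one₀ haq0 haq.le hle
      have k2 : ‖qq τ‖ * (‖qq τ‖)^(-2:ℤ)
          ≤ ‖pp z‖ * (‖qq τ‖)^lam :=
        mul_le_mul h1.le k1 (le_of_lt (zpow_pos haq0 _)) hap0.le
      have k3 : ‖qq τ‖ * (‖qq τ‖)^(-2:ℤ)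
          = (‖qq τ‖)⁻¹ := by
        calc ‖qq τ‖ * (‖qq τ‖)^(-2:ℤ)
            = (‖qq τ‖)^(1:ℤ) * (‖qq τ‖)^(-2:ℤ) := by rw [zpow_one]
          _ = (‖qq τ‖)^(1 + -2 : ℤ) := (zpow_add₀ haq0.ne' 1 (-2)).symm
          _ = (‖qq τ‖)⁻¹ := by norm_num
      linarith
    · have hge : (2:ℤ) ≤ lam := by omega
      have k1 : (‖qq τ‖)^lam ≤ (‖qq τ‖)^(2:ℤ) :=
        zpow_le_zpow_right_of_le_one₀ haq0 haq.le hge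
      have k2 : ‖pp z‖ * (‖qq τ‖)^lam
          < (‖qq τ‖)⁻¹ * (‖qq τ‖)^(2:ℤ) :=
        mul_lt_mul h2 k1 (zpow_pos haq0 _) (by positivity)
      have k3 : (‖qq τ‖)⁻¹ * (‖qq τ‖)^(2:ℤ)
          = ‖qq τ‖ := by
        calc (‖qq τ‖)⁻¹ * (‖qq τ‖)^(2:ℤ)
            = (‖qq τ‖)^(-1:ℤ) * (‖qq τ‖)^(2:ℤ) := by
              rw [zpow_neg_one]
          _ = (‖qq τ‖)^(-1 + 2 : ℤ) := (zpow_add₀ haq0.ne' (-1) 2).symm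
          _ = ‖qq τ‖ := by norm_num
      linarith
  obtain rfl | rfl | rfl := hlam
  · -- lam = -1
    rw [zpow_neg_one] at h1' h2' hp'
    have hlt1 : ‖pp z‖ < 1 := by
      have h := mul_lt_mul_of_pos_right h2' haq0
      rw [mul_assoc, inv_mul_cancel₀ haq0.ne', mul_one] at h
      exact h
    have hb1 : 1 < ‖(pp z)⁻¹‖ := by
      rw [norm_inv, hnp]
      exact (one_lt_inv₀ hap0).2 hlt1
    have hb2 : ‖(pp z)⁻¹‖ * ‖qq τ‖ < 1 := by
      rw [norm_inv, hnp, hnq]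
      have := mul_lt_mul_of_pos_left h1 (inv_pos.2 hap0)
      rwa [inv_mul_cancel₀ hap0.ne'] at this
    have hb3 : (pp z)⁻¹ ≠ 1 := fun hcon => hp (inv_eq_one.mp hcon)
    have hb4 : (pp z)⁻¹ * qq τ ≠ 1 := by
      intro hcon
      apply hp'
      have hq' : qq τ = pp z := ((inv_mul_eq_one₀ (pp_ne z)).mp hcon).symm
      rw [hq', mul_inv_cancel₀ (pp_ne z)]
    have base := Jab_transform (p := (pp z)⁻¹) (q := qq τ) (n := n)
      (qq_ne τ) (by rw [hnq]; exact haq) hb1 hb2 hb3 hb4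
    simp only [hJ]
    rw [hP, zpow_neg_one,
      show pp z * (qq τ)⁻¹ = ((pp z)⁻¹ * qq τ)⁻¹ by rw [mul_inv, inv_inv],
      Jab_inv n ((pp z)⁻¹ * qq τ) (qq τ)
        (mul_ne_zero (inv_ne_zero (pp_ne z)) (qq_ne τ)) hb4,
      base, Finset.mul_sum]
    refine Finset.sum_congr rfl (fun k hk => ?_)
    rw [Jab_inv k (pp z) (qq τ) (pp_ne z) hp]
    have hk' : k ≤ n := by
      have := Finset.mem_range.1 hk
      omega
    have hcast : ((-1:ℤ):ℂ)^(n-k) = ((-1:ℂ))^(n-k) := by push_cast; ring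
    rw [hcast]
    have e : ((-1:ℂ))^n * (((-1:ℂ))^(n+k) * ((-1:ℂ))^k)
        = ((-1:ℂ))^(n+k) * ((-1:ℂ))^(n-k) := by
      rw [← pow_add, ← pow_add, ← pow_add]
      exact neg_one_pow_congr_mod (by omega)
    linear_combination ((n.choose k : ℂ) * Jab k (pp z) (qq τ)) * e
  · -- lam = 0
    simp only [hJ]
    rw [hP, zpow_zero, mul_one]
    rw [Finset.sum_eq_single_of_mem n (Finset.self_mem_range_succ n)]
    · rw [Nat.sub_self, Nat.choose_self, Nat.cast_one, pow_zero]
      have hsgn : ((-1:ℂ))^(n+n) = 1 := by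
        have := neg_one_pow_congr_mod (a := n+n) (b := 0) (by omega)
        simpa using this
      rw [hsgn]
      ring
    · intro b hb hbn
      have : n - b ≠ 0 := by
        have := Finset.mem_range.1 hb
        omega
      rw [Int.cast_zero, zero_pow this]
      ring
  · -- lam = 1
    rw [zpow_one] at h1' h2' hp'
    have ha1 : 1 < ‖pp z‖ := by
      rw [hnp]
      nlinarith
    have hpqlt : ‖pp z‖ * ‖qq τ‖ < 1 := by
      rw [hnp, hnq]
      have := mul_lt_mul_of_pos_right h2 haq0
      rwa [inv_mul_cancel₀ haq0.ne'] at this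
    have base := Jab_transform (p := pp z) (q := qq τ) (n := n)
      (qq_ne τ) (by rw [hnq]; exact haq) ha1 hpqlt hp hp'
    simp only [hJ]
    rw [hP, zpow_one, base]
    refine Finset.sum_congr rfl (fun k _ => ?_)
    rw [Int.cast_one, one_pow, mul_one]


end
end

section
/- For all n ≥ 2 and all integers λ, μ, the completed function K_n(z,τ) = Σ_{k=0}^{n} (-1)^{n+k} C(n,k) J_k(z,τ) J_1(z,τ)^{n-k} is invariant under z ↦ z + λτ + μ, i.e. K_n(z + λτ + μ, τ) = K_n(z,τ). -/
open Complex

noncomputable section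

/-- The completed deformed Eisenstein series `K_n`. -/
def Kdef (n : ℕ) (z τ : ℂ) : ℂ :=
  ∑ k ∈ Finset.range (n + 1),
    (-1 : ℂ) ^ (n + k) * (n.choose k : ℂ) * Jdef k z τ * (Jdef 1 z τ) ^ (n - k)

open Finset in

lemma mySumInner (a x : ℂ) (n j : ℕ) (hj : j ≤ n) :
    ∑ k ∈ Finset.range (n+1), (n.choose k : ℂ) * (k.choose j : ℂ) * a^(k-j) * (x-a)^(n-k)
      = (n.choose j : ℂ) * x^(n-j) := by
  have h1 : ∑ k ∈ Finset.range (n+1),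
      (n.choose k : ℂ) * (k.choose j : ℂ) * a^(k-j) * (x-a)^(n-k)
      = ∑ k ∈ Finset.Ico j (n+1),
      (n.choose k : ℂ) * (k.choose j : ℂ) * a^(k-j) * (x-a)^(n-k) := by
    refine (Finset.sum_subset ?_ ?_).symm
    · intro k hk; simp only [Finset.mem_Ico, Finset.mem_range] at *; omega
    · intro k hk hk'
      simp only [Finset.mem_Ico, Finset.mem_range] at *
      have : k < j := by omega
      rw [Nat.choose_eq_zero_of_lt this]; simp
  rw [h1, Finset.sum_Ico_eq_sum_range]
  have h2 : ∀ i ∈ Finset.range (n + 1 - j),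
      (n.choose (j+i) : ℂ) * ((j+i).choose j : ℂ) * a^((j+i)-j) * (x-a)^(n-(j+i))
      = (n.choose j : ℂ) * (a^i * (x-a)^((n-j)-i) * ((n-j).choose i : ℂ)) := by
    intro i hi
    simp only [Finset.mem_range] at hi
    have hij : j + i ≤ n := by omega
    have := Nat.choose_mul (n := n) (Nat.le_add_right j i)
    have hc : (n.choose (j+i) : ℂ) * ((j+i).choose j : ℂ)
        = (n.choose j : ℂ) * ((n-j).choose i : ℂ) := by
      rw [← Nat.cast_mul, ← Nat.cast_mul, this]; norm_num
    rw [show (j+i)-j = i by omega, show n-(j+i) = (n-j)-i by omega, hc]; ring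
  rw [Finset.sum_congr rfl h2, ← Finset.mul_sum]
  congr 1
  have := add_pow a (x - a) (n - j)
  rw [show a + (x - a) = x by ring] at this
  rw [show n + 1 - j = (n - j) + 1 by omega, ← this]

lemma key (a x : ℂ) (J : ℕ → ℂ) (n : ℕ) :
    ∑ k ∈ Finset.range (n+1), (-1:ℂ)^(n+k) * (n.choose k : ℂ) *
       (∑ j ∈ Finset.range (k+1), (-1:ℂ)^(k+j) * (k.choose j : ℂ) * a^(k-j) * J j) * (x - a)^(n-k)
    = ∑ j ∈ Finset.range (n+1), (-1:ℂ)^(n+j) * (n.choose j : ℂ) * J j * x^(n-j) := by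
  have hext : ∀ k ∈ Finset.range (n+1),
      (-1:ℂ)^(n+k) * (n.choose k : ℂ) *
       (∑ j ∈ Finset.range (k+1), (-1:ℂ)^(k+j) * (k.choose j : ℂ) * a^(k-j) * J j) * (x - a)^(n-k)
      = ∑ j ∈ Finset.range (n+1), (-1:ℂ)^(n+k) * (n.choose k : ℂ) *
          ((-1:ℂ)^(k+j) * (k.choose j : ℂ) * a^(k-j) * J j) * (x - a)^(n-k) := by
    intro k hk
    simp only [Finset.mem_range] at hk
    rw [Finset.mul_sum, Finset.sum_mul]
    refine Finset.sum_subset ?_ ?_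
    · intro j hj; simp only [Finset.mem_range] at hj ⊢; omega
    · intro j hj hj'
      simp only [Finset.mem_range] at *
      rw [Nat.choose_eq_zero_of_lt (by omega : k < j)]; simp
  rw [Finset.sum_congr rfl hext, Finset.sum_comm]
  refine Finset.sum_congr rfl (fun j hj => ?_)
  simp only [Finset.mem_range] at hj
  have hsign : ∀ k : ℕ, (-1:ℂ)^(n+k) * (-1:ℂ)^(k+j) = (-1:ℂ)^(n+j) := by
    intro k
    rw [← pow_add]
    rw [show n + k + (k + j) = (n + j) + 2*k by ring, pow_add, pow_mul]
    norm_num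
  have : ∀ k ∈ Finset.range (n+1),
      (-1:ℂ)^(n+k) * (n.choose k : ℂ) * ((-1:ℂ)^(k+j) * (k.choose j : ℂ) * a^(k-j) * J j) * (x - a)^(n-k)
      = (-1:ℂ)^(n+j) * J j * ((n.choose k : ℂ) * (k.choose j : ℂ) * a^(k-j) * (x-a)^(n-k)) := by
    intro k hk
    rw [← hsign k]; ring
  rw [Finset.sum_congr rfl this, ← Finset.mul_sum,
    mySumInner a x n j (by omega : j ≤ n)]
  ring


/-- assuming the elliptic transformation law for the `J_m`, the completion
`K_n` is invariant under `z ↦ z + λτ + μ`. -/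
theorem K_double_periodic (n : ℕ) (hn : 2 ≤ n) (lam mu : ℤ) (z τ : ℂ) (hτ : 0 < τ.im)
    (hell : ∀ m : ℕ,
      Jdef m (z + lam * τ + mu) τ
        = ∑ k ∈ Finset.range (m + 1),
            (-1 : ℂ) ^ (m + k) * (m.choose k : ℂ) * (lam : ℂ) ^ (m - k) * Jdef k z τ) :
    Kdef n (z + lam * τ + mu) τ = Kdef n z τ := by
  have h0 : Jdef 0 z τ = 1 := by simp [Jdef]
  have h1 : Jdef 1 (z + lam * τ + mu) τ = Jdef 1 z τ - (lam : ℂ) := by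
    rw [hell 1]
    simp [Finset.sum_range_succ, h0]
    ring
  unfold Kdef
  rw [← key (lam : ℂ) (Jdef 1 z τ) (fun j => Jdef j z τ) n]
  refine Finset.sum_congr rfl (fun k hk => ?_)
  rw [hell k, h1]

end
end
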